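/- The class DIM_str^1 = {X : Dim(X) = 1} is dense in Cantor space but contains no computable sequence; therefore it is not a Pi^0_2 class. -/

import Mathlib

open Filter Topology

abbrev Cantor := ℕ → Bool

/-- The length-`n` prefix of an infinite binary sequence, as a list. -/
def pref (X : ℕ → Bool) (n : ℕ) : List Bool := (List.range n).map X

/-- A predicate is computably enumerable (c.e., Σ⁰₁). -/
def CEPred {α : Type} [Primcodable α] (P : α → Prop) : Prop :=
  ∃ f : α →. Unit, Partrec f ∧ ∀ a, P a ↔ (f a).Dom

/-- A predicate (of the outer quantified numbers together with a finite prefix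
of the sequence) is Δ⁰₁, i.e. computable. -/
def DeltaPred (P : List ℕ → List Bool → Prop) : Prop :=
  ComputablePred fun p : List ℕ × List Bool => P p.1 p.2

/-- A predicate is Π⁰₁, i.e. co-computably enumerable. -/
def PiPred (P : List ℕ → List Bool → Prop) : Prop :=
  CEPred fun p : List ℕ × List Bool => ¬ P p.1 p.2

/-- `AltQ n b P ks A`: `n` alternating quantifiers (starting with `∃` if `b`,
with `∀` otherwise) applied to the predicate `P`, where the innermost
quantified variable is the length of the prefix of `A` handed to `P`, and `ks`
accumulates the previously quantified numbers. -/
def AltQ : ℕ → Bool → (List ℕ → List Bool → Prop) → List ℕ → Cantor → Prop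
  | 0, _, P, ks, _ => P ks []
  | 1, true, P, ks, A => ∃ k, P ks (pref A k)
  | 1, false, P, ks, A => ∀ k, P ks (pref A k)
  | n+2, true, P, ks, A => ∃ k, AltQ (n+1) false P (ks ++ [k]) A
  | n+2, false, P, ks, A => ∀ k, AltQ (n+1) true P (ks ++ [k]) A

/-- `X ∈ Σ⁰ₙ[C]`: definable with `n` alternating quantifiers starting with
`∃`, over some predicate in the class `C`. -/
def SigmaIn (n : ℕ) (C : (List ℕ → List Bool → Prop) → Prop) (X : Set Cantor) : Prop :=
  ∃ P, C P ∧ ∀ A : Cantor, A ∈ X ↔ AltQ n true P [] A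

/-- `X ∈ Π⁰ₙ[C]`: definable with `n` alternating quantifiers starting with
`∀`, over some predicate in the class `C`. -/
def PiIn (n : ℕ) (C : (List ℕ → List Bool → Prop) → Prop) (X : Set Cantor) : Prop :=
  ∃ P, C P ∧ ∀ A : Cantor, A ∈ X ↔ AltQ n false P [] A

/-- A prefix-free machine: a partial computable map from programs (finite
binary strings) to strings, whose domain is an antichain under the prefix
relation. -/
def PFMachine (M : List Bool →. List Bool) : Prop :=
  Partrec M ∧ ∀ p q : List Bool, (M p).Dom → (M q).Dom → p <+: q → p = q

/-- A universal prefix-free machine: a prefix-free machine simulating every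
prefix-free machine with only a constant overhead in program length. -/
def UniversalPF (U : List Bool →. List Bool) : Prop :=
  PFMachine U ∧ ∀ M : List Bool →. List Bool, PFMachine M → ∃ c : ℕ,
    ∀ w p : List Bool, w ∈ M p → ∃ q : List Bool, w ∈ U q ∧ q.length ≤ p.length + c

/-- Prefix-free Kolmogorov complexity with respect to the machine `U`: the
length of a shortest program producing `w`. -/
noncomputable def K (U : List Bool →. List Bool) (w : List Bool) : ℕ :=
  sInf {n : ℕ | ∃ p : List Bool, w ∈ U p ∧ p.length = n}

/-- `dimK U X = liminf_n K(X↾n)/n`, the (Kolmogorov characterization of the)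
constructive dimension of the sequence `X`. -/
noncomputable def dimK (U : List Bool →. List Bool) (X : Cantor) : ℝ :=
  Filter.liminf (fun n : ℕ => (K U (pref X n) : ℝ) / n) Filter.atTop

/-- `DimK U X = limsup_n K(X↾n)/n`, the (Kolmogorov characterization of the)
constructive strong dimension of the sequence `X`. -/
noncomputable def DimK (U : List Bool →. List Bool) (X : Cantor) : ℝ :=
  Filter.limsup (fun n : ℕ => (K U (pref X n) : ℝ) / n) Filter.atTop

/-- self-delimiting header: `1^k 0 1^r 0` -/
def hd (k r : ℕ) : List Bool := List.replicate k true ++ false :: (List.replicate r true ++ [false])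

lemma repl_prefix : ∀ {k k' : ℕ} {t t' : List Bool},
    (List.replicate k true ++ false :: t) <+: (List.replicate k' true ++ false :: t') →
    k = k' ∧ t <+: t' := by
  intro k
  induction k with
  | zero =>
    intro k' t t' h
    cases k' with
    | zero => simpa using h
    | succ k' =>
      exfalso
      simp [List.replicate_succ, List.cons_prefix_cons] at h
  | succ k ih =>
    intro k' t t' h
    cases k' with
    | zero =>
      exfalso
      simp [List.replicate_succ, List.cons_prefix_cons] at h
    | succ k' =>
      simp only [List.replicate_succ, List.cons_append, List.cons_prefix_cons] at h
      obtain ⟨kk, tt⟩ := ih h.2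
      exact ⟨by omega, tt⟩

lemma hd_prefix_unique {k r k' r' : ℕ} {p : List Bool}
    (h1 : hd k r <+: p) (h2 : hd k' r' <+: p) : k = k' ∧ r = r' := by
  have hcomp := List.prefix_or_prefix_of_prefix h1 h2
  have key : ∀ {a b a' b' : ℕ}, hd a b <+: hd a' b' → a = a' ∧ b = b' := by
    intro a b a' b' h
    obtain ⟨haa, ht⟩ := repl_prefix h
    have := repl_prefix (t := ([] : List Bool)) (t' := ([] : List Bool)) (by simpa using ht)
    exact ⟨haa, this.1⟩
  rcases hcomp with h | h
  · exact key h
  · obtain ⟨a, b⟩ := key h; exact ⟨a.symm, b.symm⟩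

lemma hd_length (k r : ℕ) : (hd k r).length = k + r + 2 := by simp [hd]; omega

/-- parse `p` as `hd k r ++ w` -/
def parse (p : List Bool) : Option (ℕ × ℕ × List Bool) :=
  ((List.range p.length).flatMap fun k => (List.range p.length).map fun r => (k, r)).foldr
    (fun kr acc =>
      Option.casesOn (if p.take (kr.1 + kr.2 + 2) = hd kr.1 kr.2 then
        some (kr.1, kr.2, p.drop (kr.1 + kr.2 + 2)) else none) acc some)
    none

lemma take_eq_hd_iff {p : List Bool} {k r : ℕ} :
    p.take (k + r + 2) = hd k r ↔ hd k r <+: p := by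
  constructor
  · intro h; rw [← h]; exact List.take_prefix _ _
  · intro h
    have hl : k + r + 2 ≤ p.length := by
      have := h.length_le; rw [hd_length] at this; omega
    obtain ⟨w, rfl⟩ := h
    rw [List.take_append_of_le_length, List.take_of_length_le] <;> simp [hd_length] <;> omega

lemma foldr_findsome_eq_some {α β : Type*} {f : α → Option β} {b : β} :
    ∀ {l : List α}, (l.foldr (fun a acc => Option.casesOn (f a) acc some) none = some b)
    → ∃ a ∈ l, f a = some b := by
  intro l
  induction l with
  | nil => intro h; simp at h
  | cons x t ih =>
    intro h
    simp only [List.foldr_cons] at h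
    cases hx : f x with
    | none => rw [hx] at h; obtain ⟨a, ha, hfa⟩ := ih h; exact ⟨a, by simp [ha], hfa⟩
    | some c => rw [hx] at h; simp at h; exact ⟨x, by simp, by rw [hx, h]⟩

lemma foldr_findsome_of_mem {α β : Type*} {f : α → Option β} {b : β} {a : α} :
    ∀ {l : List α}, a ∈ l → f a = some b → (∀ a' ∈ l, f a' ≠ none → a' = a) →
    l.foldr (fun a acc => Option.casesOn (f a) acc some) none = some b := by
  intro l
  induction l with
  | nil => intro h; simp at h
  | cons x t ih =>
    intro hmem hfa huniq
    simp only [List.foldr_cons]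
    cases hx : f x with
    | none =>
      have hat : a ∈ t := by
        rcases List.mem_cons.1 hmem with rfl | h
        · rw [hfa] at hx; simp at hx
        · exact h
      exact ih hat hfa fun a' ha' h' => huniq a' (by simp [ha']) h'
    | some c =>
      have : x = a := huniq x (by simp) (by simp [hx])
      subst this
      rw [hfa] at hx
      simp [← hx]


lemma parse_eq_some_iff {p : List Bool} {k r : ℕ} {w : List Bool} :
    parse p = some (k, r, w) ↔ p = hd k r ++ w := by
  constructor
  · intro h
    obtain ⟨⟨a, b⟩, _, hf⟩ := foldr_findsome_eq_some h
    by_cases htest : p.take (a + b + 2) = hd a b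
    · rw [if_pos htest] at hf
      simp only [Option.some.injEq, Prod.mk.injEq] at hf
      obtain ⟨rfl, rfl, rfl⟩ := hf
      have hpre := take_eq_hd_iff.mp htest
      conv_lhs => rw [← List.take_append_drop (a + b + 2) p]
      rw [htest]
    · rw [if_neg htest] at hf; simp at hf
  · rintro rfl
    apply foldr_findsome_of_mem (a := (k, r))
    · have hlen : (hd k r ++ w).length = k + r + 2 + w.length := by simp [hd_length]
      simp only [List.mem_flatMap, List.mem_map, List.mem_range]
      exact ⟨k, by omega, r, by omega, rfl⟩
    · rw [if_pos (take_eq_hd_iff.mpr (List.prefix_append _ _))]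
      congr 2
      rw [← hd_length k r, List.drop_left]
    · rintro ⟨a, b⟩ - hne
      by_cases htest : (hd k r ++ w).take (a + b + 2) = hd a b
      · have := hd_prefix_unique (take_eq_hd_iff.mp htest) (List.prefix_append _ _)
        simp [this]
      · simp [htest] at hne

section PrimrecBits

lemma primrec_replicate_true : Primrec fun n => List.replicate n true := by
  have h : Primrec fun n => (List.range n).map (fun _ => true) :=
    Primrec.list_map Primrec.list_range ((Primrec.const true).comp Primrec.fst).to₂
  exact h.of_eq fun n => by simp [List.map_const', List.eq_replicate_iff]

lemma primrec_hd : Primrec₂ hd := by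
  unfold hd
  exact Primrec.list_append.comp₂ (primrec_replicate_true.comp Primrec.fst).to₂
    ((Primrec.list_cons.comp (Primrec.const false)
      (Primrec.list_append.comp (primrec_replicate_true.comp Primrec.snd)
        (Primrec.const [false]))).comp Primrec.id).to₂

lemma primrec_take : Primrec₂ fun (p : List Bool) (n : ℕ) => p.take n := by
  have h : Primrec₂ fun (p : List Bool) (n : ℕ) =>
      (List.range (min n p.length)).map (fun i => p.getD i false) := by
    apply Primrec.list_map
    · exact Primrec.list_range.comp (Primrec.nat_min.comp Primrec.snd
        (Primrec.list_length.comp Primrec.fst))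
    · exact (Primrec.list_getD false).comp₂ (Primrec.fst.comp Primrec.fst).to₂
        Primrec.snd.to₂
  apply h.of_eq
  intro p n
  apply List.ext_getElem
  · simp [Nat.min_comm]
  · intro i h1 h2
    simp only [List.length_map, List.length_range, lt_min_iff, List.length_take] at h1 h2
    simp [List.getD, List.getElem?_eq_getElem (by omega : i < p.length)]

lemma primrec_drop : Primrec₂ fun (p : List Bool) (n : ℕ) => p.drop n := by
  have h : Primrec₂ fun (p : List Bool) (n : ℕ) =>
      (List.range (p.length - n)).map (fun i => p.getD (n + i) false) := by
    apply Primrec.list_map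
    · exact Primrec.list_range.comp (Primrec.nat_sub.comp
        (Primrec.list_length.comp Primrec.fst) Primrec.snd)
    · exact (Primrec.list_getD false).comp₂ (Primrec.fst.comp Primrec.fst).to₂
        ((Primrec.nat_add.comp (Primrec.snd.comp Primrec.fst) Primrec.snd)).to₂
  apply h.of_eq
  intro p n
  apply List.ext_getElem
  · simp
  · intro i h1 h2
    simp only [List.length_map, List.length_range, List.length_drop] at h1 h2
    simp [List.getD, List.getElem?_eq_getElem (by omega : n + i < p.length)]

lemma primrec_parse : Primrec parse := by
  unfold parse
  apply Primrec.list_foldr (h := fun (p : List Bool) (x : (ℕ × ℕ) × Option (ℕ × ℕ × List Bool)) =>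
    Option.casesOn (if p.take (x.1.1 + x.1.2 + 2) = hd x.1.1 x.1.2 then
      some (x.1.1, x.1.2, p.drop (x.1.1 + x.1.2 + 2)) else none) x.2 some)
  · exact Primrec.list_flatMap (Primrec.list_range.comp Primrec.list_length)
      (Primrec.list_map (Primrec.list_range.comp (Primrec.list_length.comp Primrec.fst))
        (Primrec₂.pair.comp₂ (Primrec.snd.comp Primrec.fst).to₂ Primrec.snd.to₂))
  · exact Primrec.const none
  · -- fun (p, (kr, acc)) => Option.casesOn (test) acc some
    apply Primrec.option_casesOn
    · -- the test
      apply Primrec.ite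
      · exact Primrec.eq.comp
          (primrec_take.comp Primrec.fst
            (Primrec.nat_add.comp (Primrec.nat_add.comp
              (Primrec.fst.comp (Primrec.fst.comp Primrec.snd))
              (Primrec.snd.comp (Primrec.fst.comp Primrec.snd))) (Primrec.const 2)))
          (primrec_hd.comp (Primrec.fst.comp (Primrec.fst.comp Primrec.snd))
            (Primrec.snd.comp (Primrec.fst.comp Primrec.snd)))
      · exact Primrec.option_some.comp (Primrec₂.pair.comp
          (Primrec.fst.comp (Primrec.fst.comp Primrec.snd))
          (Primrec₂.pair.comp (Primrec.snd.comp (Primrec.fst.comp Primrec.snd))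
            (primrec_drop.comp Primrec.fst
              (Primrec.nat_add.comp (Primrec.nat_add.comp
                (Primrec.fst.comp (Primrec.fst.comp Primrec.snd))
                (Primrec.snd.comp (Primrec.fst.comp Primrec.snd))) (Primrec.const 2)))))
      · exact Primrec.const none
    · exact Primrec.snd.comp Primrec.snd
    · exact Primrec.option_some.comp₂ Primrec.snd.to₂

end PrimrecBits

def mach (G : ℕ × ℕ × List Bool → Option (List Bool)) : List Bool →. List Bool :=
  fun p => ((parse p).bind G : Option (List Bool))

lemma mem_mach {G : ℕ × ℕ × List Bool → Option (List Bool)} {p x : List Bool} :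
    x ∈ mach G p ↔ ∃ k r w, p = hd k r ++ w ∧ G (k, r, w) = some x := by
  simp only [mach, Part.mem_ofOption, Option.mem_def, Option.bind_eq_some_iff]
  constructor
  · rintro ⟨⟨k, r, w⟩, hp, hG⟩
    exact ⟨k, r, w, parse_eq_some_iff.mp hp, hG⟩
  · rintro ⟨k, r, w, hp, hG⟩
    exact ⟨(k, r, w), parse_eq_some_iff.mpr hp, hG⟩

lemma mach_pf {G : ℕ × ℕ × List Bool → Option (List Bool)} (hG : Computable G)
    (Hlen : ∀ k r w w' x x', G (k, r, w) = some x → G (k, r, w') = some x' →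
      w.length = w'.length) : PFMachine (mach G) := by
  constructor
  · exact Computable.ofOption (Computable.option_bind primrec_parse.to_comp
      (hG.comp Primrec.snd.to_comp).to₂)
  · intro p q hp hq hpq
    obtain ⟨x, hx⟩ := Part.dom_iff_mem.mp hp
    obtain ⟨y, hy⟩ := Part.dom_iff_mem.mp hq
    obtain ⟨k, r, w, rfl, hGx⟩ := mem_mach.mp hx
    obtain ⟨k', r', w', rfl, hGy⟩ := mem_mach.mp hy
    have h1 : hd k r <+: hd k' r' ++ w' := (List.prefix_append _ _).trans hpq
    have h2 : hd k' r' <+: hd k' r' ++ w' := List.prefix_append _ _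
    obtain ⟨rfl, rfl⟩ := hd_prefix_unique h1 h2
    have hw : w.length = w'.length := Hlen _ _ _ _ _ _ hGx hGy
    exact hpq.eq_of_length (by simp [hw])

lemma K_le {U : List Bool →. List Bool} {w p : List Bool} (h : w ∈ U p) :
    K U w ≤ p.length := Nat.sInf_le ⟨p, h, rfl⟩

lemma K_ge {U : List Bool →. List Bool} {w : List Bool} {m : ℕ}
    (hne : ∃ p, w ∈ U p) (h : ∀ p, w ∈ U p → m ≤ p.length) : m ≤ K U w := by
  obtain ⟨q, hq, hl⟩ := Nat.sInf_mem (s := {n : ℕ | ∃ p : List Bool, w ∈ U p ∧ p.length = n})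
    ⟨_, hne.choose, hne.choose_spec, rfl⟩
  rw [K, ← hl]
  exact h q hq

/-- value of a bool string as a binary numeral with leading 1 -/
def bval (p : List Bool) : ℕ := p.foldl (fun a b => 2 * a + cond b 1 0) 1

lemma bval_aux_bounds : ∀ (p : List Bool) (a : ℕ),
    a * 2 ^ p.length ≤ p.foldl (fun a b => 2 * a + cond b 1 0) a ∧
    p.foldl (fun a b => 2 * a + cond b 1 0) a < (a + 1) * 2 ^ p.length := by
  intro p
  induction p with
  | nil => intro a; simp
  | cons b t ih =>
    intro a
    obtain ⟨h1, h2⟩ := ih (2 * a + cond b 1 0)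
    simp only [List.foldl_cons, List.length_cons]
    constructor
    · calc a * 2 ^ (t.length + 1) = (2 * a) * 2 ^ t.length := by ring
        _ ≤ (2 * a + cond b 1 0) * 2 ^ t.length := by
            have : (0:ℕ) ≤ cond b 1 0 := Nat.zero_le _
            nlinarith [Nat.pow_pos (n := t.length) (by norm_num : 0 < 2)]
        _ ≤ _ := h1
    · calc t.foldl _ (2 * a + cond b 1 0) < (2 * a + cond b 1 0 + 1) * 2 ^ t.length := h2
        _ ≤ (2 * a + 2) * 2 ^ t.length := by
            have : cond b 1 0 ≤ 1 := by cases b <;> simp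
            nlinarith [Nat.pow_pos (n := t.length) (by norm_num : 0 < 2)]
        _ = (a + 1) * 2 ^ (t.length + 1) := by ring

lemma bval_inj_aux : ∀ (p q : List Bool) (a : ℕ), p.length = q.length →
    p.foldl (fun a b => 2 * a + cond b 1 0) a = q.foldl (fun a b => 2 * a + cond b 1 0) a →
    p = q := by
  intro p
  induction p with
  | nil => intro q a hl _; exact (List.length_eq_zero_iff.mp hl.symm).symm
  | cons b t ih =>
    intro q a hl he
    cases q with
    | nil => simp at hl
    | cons c s =>
      simp only [List.length_cons, Nat.succ.injEq] at hl
      simp only [List.foldl_cons] at he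
      have hbc : (2 * a + cond b 1 0) = (2 * a + cond c 1 0) := by
        by_contra hne
        obtain ⟨hb1, hb2⟩ := bval_aux_bounds t (2 * a + cond b 1 0)
        obtain ⟨hc1, hc2⟩ := bval_aux_bounds s (2 * a + cond c 1 0)
        rw [hl] at hb1 hb2
        rcases Nat.lt_or_ge (2 * a + cond b 1 0) (2 * a + cond c 1 0) with h | h
        · have : (2 * a + cond b 1 0) + 1 ≤ (2 * a + cond c 1 0) := h
          nlinarith [Nat.pow_pos (n := s.length) (by norm_num : 0 < 2)]
        · have : (2 * a + cond b 1 0) ≠ (2 * a + cond c 1 0) := hne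
          have h' : (2 * a + cond c 1 0) + 1 ≤ (2 * a + cond b 1 0) := by omega
          nlinarith [Nat.pow_pos (n := s.length) (by norm_num : 0 < 2)]
      have : b = c := by cases b <;> cases c <;> simp_all
      subst this
      rw [hbc] at he
      rw [ih s _ hl he]

lemma bval_lt {p : List Bool} {m : ℕ} (h : p.length < m) : bval p - 1 < 2 ^ m - 1 := by
  obtain ⟨h1, h2⟩ := bval_aux_bounds p 1
  have hb : bval p < 2 ^ (p.length + 1) := by
    have : (1 + 1) * 2 ^ p.length = 2 ^ (p.length + 1) := by ring
    unfold bval; omega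
  have h3 : 2 ^ (p.length + 1) ≤ 2 ^ m := Nat.pow_le_pow_right (by norm_num) h
  have h4 : 1 ≤ bval p := by
    have : 1 ≤ 2 ^ p.length := Nat.one_le_two_pow
    unfold bval; nlinarith
  omega

lemma bval_inj {p q : List Bool} (h : bval p - 1 = bval q - 1) : p = q := by
  have hp := (bval_aux_bounds p 1).1
  have hq := (bval_aux_bounds q 1).1
  have hp1 : 1 ≤ bval p := le_trans (by simpa using Nat.one_le_two_pow) hp
  have hq1 : 1 ≤ bval q := le_trans (by simpa using Nat.one_le_two_pow) hq
  have he : bval p = bval q := by omega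
  have hl : p.length = q.length := by
    by_contra hne
    rcases Nat.lt_or_ge p.length q.length with h' | h'
    · have := (bval_aux_bounds p 1).2
      have h2 : 2 ^ (p.length + 1) ≤ 2 ^ q.length := Nat.pow_le_pow_right (by norm_num) h'
      simp only [one_mul, Nat.add_mul] at *
      unfold bval at *; omega
    · have h' : q.length < p.length := by omega
      have := (bval_aux_bounds q 1).2
      have h2 : 2 ^ (q.length + 1) ≤ 2 ^ p.length := Nat.pow_le_pow_right (by norm_num) h'
      simp only [one_mul, Nat.add_mul] at *
      unfold bval at *; omega
  exact bval_inj_aux p q 1 hl he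

/-- In any cylinder there is an extension of length `m` that is `m`-incompressible. -/
lemma exists_incompressible (U : List Bool →. List Bool) (τ : List Bool) (m : ℕ) :
    ∃ w : List Bool, w.length = m ∧ ∀ p, (τ ++ w) ∈ U p → m ≤ p.length := by
  by_contra hcon
  push_neg at hcon
  have hch : ∀ g : Fin m → Bool, ∃ p, (τ ++ List.ofFn g) ∈ U p ∧ p.length < m := by
    intro g
    obtain ⟨p, hp, hl⟩ := hcon (List.ofFn g) (by simp)
    exact ⟨p, hp, hl⟩
  choose P hP hPl using hch
  have hm2 : 2 ≤ 2 ^ m := by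
    rcases Nat.eq_zero_or_pos m with rfl | hm
    · obtain ⟨p, _, hl⟩ := hcon [] rfl; omega
    · calc 2 = 2 ^ 1 := rfl
        _ ≤ 2 ^ m := Nat.pow_le_pow_right (by norm_num) hm
  have hinj : Function.Injective fun g : Fin m → Bool => (⟨bval (P g) - 1, bval_lt (hPl g)⟩ : Fin (2 ^ m - 1)) := by
    intro g g' h
    simp only [Fin.mk.injEq] at h
    have hPe : P g = P g' := bval_inj h
    have : (τ ++ List.ofFn g) = (τ ++ List.ofFn g') :=
      Part.mem_unique (hP g) (hPe ▸ hP g')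
    exact List.ofFn_injective (List.append_cancel_left this)
  have := Fintype.card_le_of_injective _ hinj
  simp [Fintype.card_fun] at this
  omega


-- pref lemmas
lemma pref_length (X : Cantor) (n : ℕ) : (pref X n).length = n := by simp [pref]

lemma pref_getElem (X : Cantor) {n i : ℕ} (h : i < n) :
    (pref X n)[i]'(by simp [pref_length]; omega) = X i := by simp [pref]

lemma pref_succ (X : Cantor) (n : ℕ) : pref X (n + 1) = pref X n ++ [X n] := by
  simp [pref, List.range_succ]

lemma computable_pref {X : Cantor} (hX : Computable X) : Computable (pref X) := by
  have h : Computable fun n => Nat.rec (motive := fun _ => List Bool) []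
      (fun y IH => IH ++ [X y]) n :=
    Computable.nat_rec Computable.id (Computable.const [])
      (Computable.list_concat.comp (Computable.snd.comp Computable.snd)
        (hX.comp (Computable.fst.comp Computable.snd))).to₂
  apply h.of_eq
  intro n
  induction n with
  | zero => simp [pref]
  | succ n ih => rw [pref_succ]; simp [ih]

lemma sqrt_facts (n : ℕ) : Nat.sqrt n * Nat.sqrt n ≤ n ∧ n - Nat.sqrt n * Nat.sqrt n ≤ 2 * Nat.sqrt n := by
  have h1 := Nat.sqrt_le' n
  have h2 := Nat.lt_succ_sqrt' n
  have h1' : Nat.sqrt n * Nat.sqrt n ≤ n := by nlinarith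
  have h2' : n < Nat.sqrt n * Nat.sqrt n + 2 * Nat.sqrt n + 1 := by nlinarith
  omega

/-- every string has a `U`-program of length `|w| + 3√|w| + 2 + c`. -/
lemma K_upper {U : List Bool →. List Bool} (hU : UniversalPF U) :
    ∃ c, ∀ w : List Bool, (∃ p, w ∈ U p) ∧
      K U w ≤ w.length + 3 * Nat.sqrt w.length + 2 + c := by
  set G1 : ℕ × ℕ × List Bool → Option (List Bool) :=
    fun t => if t.2.2.length = t.1 * t.1 + t.2.1 then some t.2.2 else none with hG1def
  have hG1 : Computable G1 := by
    apply Primrec.to_comp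
    exact Primrec.ite
      (Primrec.eq.comp (Primrec.list_length.comp (Primrec.snd.comp Primrec.snd))
        (Primrec.nat_add.comp (Primrec.nat_mul.comp Primrec.fst Primrec.fst)
          (Primrec.fst.comp Primrec.snd)))
      (Primrec.option_some.comp (Primrec.snd.comp Primrec.snd)) (Primrec.const none)
  have hpf : PFMachine (mach G1) := by
    apply mach_pf hG1
    intro k r w w' x x' h1 h2
    simp only [hG1def] at h1 h2
    split at h1 <;> split at h2 <;> simp_all
  obtain ⟨c, hc⟩ := hU.2 (mach G1) hpf
  refine ⟨c, fun w => ?_⟩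
  obtain ⟨hs1, hs2⟩ := sqrt_facts w.length
  have hmem : w ∈ mach G1 (hd (Nat.sqrt w.length) (w.length - Nat.sqrt w.length * Nat.sqrt w.length) ++ w) := by
    rw [mem_mach]
    exact ⟨_, _, w, rfl, by simp only [hG1def]; rw [if_pos (by omega)]⟩
  obtain ⟨q, hq, hql⟩ := hc w _ hmem
  refine ⟨⟨q, hq⟩, (K_le hq).trans (hql.trans ?_)⟩
  rw [List.length_append, hd_length]
  omega

/-- for computable `X`, prefixes have logarithmic complexity. -/
lemma K_upper_computable {U : List Bool →. List Bool} (hU : UniversalPF U)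
    {X : Cantor} (hX : Computable X) :
    ∃ c, ∀ n, K U (pref X n) ≤ 3 * Nat.sqrt n + 2 + c := by
  set G2 : ℕ × ℕ × List Bool → Option (List Bool) :=
    fun t => if t.2.2 = ([] : List Bool) then some (pref X (t.1 * t.1 + t.2.1)) else none with hG2def
  have hG2 : Computable G2 := by
    have hcond : Computable fun t : ℕ × ℕ × List Bool =>
        cond (decide (t.2.2 = ([] : List Bool))) (some (pref X (t.1 * t.1 + t.2.1))) none := by
      apply Computable.cond
      · exact Primrec.to_comp (PrimrecPred.decide (Primrec.eq.comp (Primrec.snd.comp Primrec.snd) (Primrec.const [])))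
      · exact Computable.option_some.comp ((computable_pref hX).comp
          (Primrec.to_comp (Primrec.nat_add.comp (Primrec.nat_mul.comp Primrec.fst Primrec.fst)
            (Primrec.fst.comp Primrec.snd))))
      · exact Computable.const none
    apply hcond.of_eq
    intro t
    by_cases h : t.2.2 = ([] : List Bool) <;> simp [hG2def, h]
  have hpf : PFMachine (mach G2) := by
    apply mach_pf hG2
    intro k r w w' x x' h1 h2
    simp only [hG2def] at h1 h2
    split at h1 <;> split at h2 <;> simp_all
  obtain ⟨c, hc⟩ := hU.2 (mach G2) hpf
  refine ⟨c, fun n => ?_⟩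
  obtain ⟨hs1, hs2⟩ := sqrt_facts n
  have hmem : pref X n ∈ mach G2 (hd (Nat.sqrt n) (n - Nat.sqrt n * Nat.sqrt n) ++ []) := by
    rw [mem_mach]
    refine ⟨_, _, [], rfl, ?_⟩
    simp only [hG2def, if_pos rfl, Nat.add_sub_cancel' hs1]
  obtain ⟨q, hq, hql⟩ := hc _ _ hmem
  refine (K_le hq).trans (hql.trans ?_)
  rw [List.length_append, hd_length]
  simp only [List.length_nil, Nat.add_zero]
  omega


-- ## analysis lemmas

lemma nat_sqrt_tendsto : Tendsto Nat.sqrt atTop atTop := by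
  apply tendsto_atTop_atTop.2
  intro b
  exact ⟨b * b, fun n hn => Nat.le_sqrt'.mpr (by nlinarith)⟩

lemma tendsto_aux (C : ℕ) :
    Tendsto (fun n : ℕ => ((3 * Nat.sqrt n + C : ℕ) : ℝ) / n) atTop (𝓝 0) := by
  have hmaj : Tendsto (fun n : ℕ => ((3 + C : ℝ)) / (Nat.sqrt n : ℝ)) atTop (𝓝 0) :=
    (tendsto_const_div_atTop_nhds_zero_nat (𝕜 := ℝ) (3 + C)).comp nat_sqrt_tendsto
  apply tendsto_of_tendsto_of_tendsto_of_le_of_le' tendsto_const_nhds hmaj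
  · filter_upwards with n
    positivity
  · filter_upwards [eventually_ge_atTop 1] with n hn
    set s := Nat.sqrt n with hs
    have hs1 : 1 ≤ s := by
      rw [hs]; exact Nat.le_sqrt'.mpr (by simpa using hn)
    have hsn : s * s ≤ n := by have := Nat.sqrt_le' n; nlinarith
    have hsR : (1 : ℝ) ≤ (s : ℝ) := by exact_mod_cast hs1
    have hsnR : (s : ℝ) * s ≤ n := by exact_mod_cast hsn
    have hnpos : (0 : ℝ) < n := by positivity
    have hspos : (0 : ℝ) < s := by linarith
    rw [div_le_div_iff₀ hnpos hspos]
    push_cast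
    have hsn2 : (s : ℝ) ≤ (n : ℝ) := by nlinarith
    have h3 : 3 * ((s:ℝ) * s) ≤ 3 * (n:ℝ) := by linarith
    have h4 : (C:ℝ) * s ≤ (C:ℝ) * n := by
      have : (0:ℝ) ≤ C := by positivity
      nlinarith
    nlinarith

lemma f_nonneg (U : List Bool →. List Bool) (X : Cantor) (n : ℕ) :
    (0 : ℝ) ≤ (K U (pref X n) : ℝ) / n := by positivity

lemma DimK_le_one {U : List Bool →. List Bool} (hU : UniversalPF U) (X : Cantor) :
    DimK U X ≤ 1 := by
  obtain ⟨c, hc⟩ := K_upper hU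
  set u : ℕ → ℝ := fun n => 1 + ((3 * Nat.sqrt n + (2 + c) : ℕ) : ℝ) / n with hu
  have hle : ∀ᶠ n in atTop, (K U (pref X n) : ℝ) / n ≤ u n := by
    filter_upwards [eventually_ge_atTop 1] with n hn
    have hK := (hc (pref X n)).2
    rw [pref_length] at hK
    have hnpos : (0 : ℝ) < n := by exact_mod_cast hn
    rw [hu]
    have hK' : (K U (pref X n) : ℝ) ≤ ((n + 3 * Nat.sqrt n + 2 + c : ℕ) : ℝ) := Nat.cast_le.mpr hK
    push_cast at hK' ⊢
    rw [div_le_iff₀ hnpos] at *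
    have : (1 + (3 * (Nat.sqrt n : ℝ) + (2 + c)) / n) * n = n + (3 * (Nat.sqrt n:ℝ) + (2 + c)) := by
      field_simp
    rw [this]
    linarith
  have hut : Tendsto u atTop (𝓝 1) := by
    have h2 := (tendsto_const_nhds (x := (1:ℝ)) (f := (atTop : Filter ℕ))).add (tendsto_aux (2 + c))
    rw [add_zero] at h2
    exact h2
  have hbdd : IsBoundedUnder (· ≤ ·) atTop u := hut.isBoundedUnder_le
  have hcob : IsCoboundedUnder (· ≤ ·) atTop fun n : ℕ => (K U (pref X n) : ℝ) / n :=
    isCoboundedUnder_le_of_le atTop fun n => f_nonneg U X n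
  calc DimK U X ≤ limsup u atTop := Filter.limsup_le_limsup hle hcob hbdd
    _ = 1 := hut.limsup_eq

lemma DimK_computable_eq_zero {U : List Bool →. List Bool} (hU : UniversalPF U)
    {X : Cantor} (hX : Computable X) : DimK U X = 0 := by
  obtain ⟨c, hc⟩ := K_upper_computable hU hX
  have ht : Tendsto (fun n : ℕ => (K U (pref X n) : ℝ) / n) atTop (𝓝 0) := by
    apply tendsto_of_tendsto_of_tendsto_of_le_of_le' tendsto_const_nhds (tendsto_aux (2 + c))
    · filter_upwards with n; exact f_nonneg U X n
    · filter_upwards [eventually_ge_atTop 1] with n hn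
      have hnpos : (0 : ℝ) < n := by exact_mod_cast hn
      gcongr
      have := hc n
      exact_mod_cast (by omega : K U (pref X n) ≤ 3 * Nat.sqrt n + (2 + c))
  exact ht.limsup_eq


lemma prefix_getD {a b : List Bool} (h : a <+: b) {i : ℕ} (hi : i < a.length) :
    b.getD i false = a.getD i false := by
  have hib : i < b.length := lt_of_lt_of_le hi h.length_le
  rw [List.getD_eq_getElem _ _ hib, List.getD_eq_getElem _ _ hi, h.getElem hi]

section Chain
variable {τ : ℕ → List Bool}

lemma chain_mono (hpre : ∀ k, τ k <+: τ (k + 1)) : ∀ j k, j ≤ k → τ j <+: τ k := by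
  intro j k h
  induction k with
  | zero => rw [Nat.le_zero.mp h]
  | succ k ih =>
    rcases Nat.lt_or_ge j (k + 1) with h' | h'
    · exact (ih (by omega)).trans (hpre k)
    · rw [Nat.le_antisymm h h']

lemma chain_pref (hpre : ∀ k, τ k <+: τ (k + 1)) (hlen : ∀ k, k ≤ (τ k).length)
    {k n : ℕ} (hn : n ≤ (τ k).length) :
    pref (fun i => (τ (i + 1)).getD i false) n = (τ k).take n := by
  apply List.ext_getElem
  · rw [pref_length, List.length_take]
    omega
  · intro i h1 h2
    rw [pref_length] at h1
    have hik : i < (τ k).length := by omega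
    rw [List.getElem_take, pref_getElem _ h1]
    have hX : (τ (i + 1)).getD i false = (τ k).getD i false := by
      rcases Nat.le_total (i + 1) k with h | h
      · exact (prefix_getD (chain_mono hpre (i+1) k h)
          (by have := hlen (i+1); omega)).symm
      · exact prefix_getD (chain_mono hpre k (i+1) h) hik
    rw [← List.getD_eq_getElem _ false hik, ← hX]
end Chain

/-- every cylinder contains a sequence of strong dimension 1. -/
lemma exists_dim_one_ext {U : List Bool →. List Bool} (hU : UniversalPF U) (σ : List Bool) :
    ∃ X : Cantor, pref X σ.length = σ ∧ DimK U X = 1 := by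
  classical
  obtain ⟨c, hc⟩ := K_upper hU
  -- the inductive construction
  let ext : ℕ → List Bool → List Bool := fun k t =>
    t ++ Classical.choose (exists_incompressible U t ((k + 1) * (t.length + 1) - t.length))
  let τ : ℕ → List Bool := fun k => Nat.rec σ ext k
  have hτ0 : τ 0 = σ := rfl
  have hτs : ∀ k, τ (k + 1) = τ k ++ Classical.choose (exists_incompressible U (τ k)
      ((k + 1) * ((τ k).length + 1) - (τ k).length)) := fun k => rfl
  have hext : ∀ k, (τ (k + 1)).length = (τ k).length + ((k + 1) * ((τ k).length + 1) - (τ k).length) ∧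
      ∀ p, (τ (k + 1)) ∈ U p → (k + 1) * ((τ k).length + 1) - (τ k).length ≤ p.length := by
    intro k
    have hsp := Classical.choose_spec (exists_incompressible U (τ k)
      ((k + 1) * ((τ k).length + 1) - (τ k).length))
    constructor
    · rw [hτs k, List.length_append, hsp.1]
    · intro p hp
      exact hsp.2 p (by rw [← hτs k]; exact hp)
  have hL : ∀ k, (τ k).length ≤ (k + 1) * ((τ k).length + 1) := fun k => by nlinarith [(τ k).length.zero_le]
  have hlen1 : ∀ k, (τ (k + 1)).length = (k + 1) * ((τ k).length + 1) := by
    intro k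
    rw [(hext k).1]
    have := hL k
    omega
  have hpre : ∀ k, τ k <+: τ (k + 1) := fun k => by rw [hτs k]; exact List.prefix_append _ _
  have hlen : ∀ k, k ≤ (τ k).length := by
    intro k
    cases k with
    | zero => omega
    | succ k => rw [hlen1 k]; nlinarith [(τ k).length.zero_le]
  set X : Cantor := fun i => (τ (i + 1)).getD i false with hX
  refine ⟨X, ?_, ?_⟩
  · rw [hX, ← hτ0, chain_pref hpre hlen (k := 0) (n := (τ 0).length) (le_refl _),
      List.take_length]
  · refine le_antisymm (DimK_le_one hU X) ?_
    by_contra hlt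
    push_neg at hlt
    obtain ⟨b, hb1, hb2⟩ := exists_between hlt
    -- b < 1, DimK < b; derive contradiction with frequent lower bounds
    have hfreq : ∃ᶠ n in atTop, b ≤ (K U (pref X n) : ℝ) / n := by
      rw [frequently_atTop]
      intro N
      obtain ⟨k0, hk0⟩ := exists_nat_one_div_lt (by linarith : (0:ℝ) < 1 - b)
      set k := max N k0 with hk
      set n := (τ (k + 1)).length with hn
      have hLk := hlen k
      have hnval : n = (k + 1) * ((τ k).length + 1) := hlen1 k
      have hkn : k + 1 ≤ n := by rw [hnval]; nlinarith [(τ k).length.zero_le]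
      have hNk : N ≤ k := le_max_left N k0
      refine ⟨n, by omega, ?_⟩
      -- pref X n = τ (k+1)
      have hp : pref X n = τ (k + 1) := by
        rw [hX, chain_pref hpre hlen (k := k + 1) (n := n) (le_of_eq hn),
          List.take_of_length_le (le_of_eq hn.symm)]
      -- K lower bound
      have hKlow : (k + 1) * ((τ k).length + 1) - (τ k).length ≤ K U (pref X n) := by
        rw [hp]
        exact K_ge (hc (τ (k + 1))).1 (hext k).2
      -- real arithmetic
      set L : ℕ := (τ k).length with hLdef
      have hnpos : (0:ℝ) < n := by
        rw [hnval]
        positivity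
      have hKR : ((k + 1 : ℕ) : ℝ) * (L + 1) - L ≤ (K U (pref X n) : ℝ) := by
        have hle : L ≤ (k + 1) * (L + 1) := hL k
        calc ((k + 1 : ℕ) : ℝ) * (L + 1) - L
            = (((k + 1) * (L + 1) - L : ℕ) : ℝ) := by
              push_cast [Nat.cast_sub hle]
              ring
          _ ≤ _ := Nat.cast_le.mpr hKlow
      rw [le_div_iff₀ hnpos]
      have hnR : (n : ℝ) = ((k+1 : ℕ) : ℝ) * (L + 1) := by
        rw [hnval]; push_cast; ring
      -- b * n ≤ (k+1)(L+1) - L  since  L ≤ (1-b) (k+1)(L+1) because 1/(k+1) < 1-b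
      have hkk : (1 : ℝ) / (k0 + 1) < 1 - b := hk0
      have hk1 : (k0 : ℝ) ≤ k := by
        have : k0 ≤ k := le_max_right N k0
        exact_mod_cast this
      have hkpos : (0:ℝ) < (k:ℝ) + 1 := by positivity
      have h1k : (1 : ℝ) / (k + 1) < 1 - b := by
        apply lt_of_le_of_lt _ hkk
        apply div_le_div_of_nonneg_left (by norm_num) (by positivity) (by linarith)
      have hLpos : (0:ℝ) ≤ (L:ℝ) := by positivity
      have hLn : (L : ℝ) ≤ (1 - b) * ((k+1) * (L+1)) := by
        have h2 : (L : ℝ) ≤ ((k:ℝ)+1) * (L+1) * (1/((k:ℝ)+1)) := by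
          rw [mul_comm, ← mul_assoc, one_div, inv_mul_cancel₀ (by positivity)]
          nlinarith
        calc (L:ℝ) ≤ ((k:ℝ)+1) * (L+1) * (1/((k:ℝ)+1)) := h2
          _ ≤ ((k:ℝ)+1) * (L+1) * (1 - b) := by
              apply mul_le_mul_of_nonneg_left (le_of_lt h1k) (by positivity)
          _ = (1 - b) * ((k+1) * (L+1)) := by ring
      calc b * (n:ℝ) = b * (((k:ℝ)+1) * (L+1)) := by rw [hnR]; push_cast; ring
        _ ≤ ((k:ℝ)+1) * (L+1) - L := by nlinarith
        _ = ((k+1:ℕ):ℝ) * (L+1) - L := by push_cast; ring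
        _ ≤ (K U (pref X n) : ℝ) := hKR
    have hbdd : IsBoundedUnder (· ≤ ·) atTop fun n : ℕ => (K U (pref X n) : ℝ) / n := by
      apply isBoundedUnder_of_eventually_le (a := (6 : ℝ) + c)
      filter_upwards [eventually_ge_atTop 1] with n hn
      have hK := (hc (pref X n)).2
      rw [pref_length] at hK
      have hs : Nat.sqrt n ≤ n := Nat.sqrt_le_self n
      have hnpos : (0:ℝ) < n := by exact_mod_cast hn
      rw [div_le_iff₀ hnpos]
      have hKR : (K U (pref X n) : ℝ) ≤ n + 3 * n + 2 + c := by
        have : K U (pref X n) ≤ n + 3 * n + 2 + c := by omega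
        exact_mod_cast this
      have hn1 : (1:ℝ) ≤ n := by exact_mod_cast hn
      nlinarith [Nat.cast_nonneg (α := ℝ) c]
    have := Filter.le_limsup_of_frequently_le hfreq hbdd
    rw [← DimK] at this
    linarith


lemma pref_eq_of_eq_lt {X A : Cantor} {n : ℕ} (h : ∀ i < n, X i = A i) :
    pref X n = pref A n := by
  apply List.ext_getElem
  · rw [pref_length, pref_length]
  · intro i h1 h2
    rw [pref_length] at h1
    rw [pref_getElem _ h1, pref_getElem _ h1]
    exact h i h1

lemma eq_lt_of_pref_eq {X A : Cantor} {n : ℕ} (h : pref X n = pref A n) :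
    ∀ i < n, X i = A i := by
  intro i hi
  have := congrArg (fun l => l[i]?) h
  simp only [List.getElem?_eq_getElem (by rw [pref_length]; omega : i < (pref X n).length),
    List.getElem?_eq_getElem (by rw [pref_length]; omega : i < (pref A n).length)] at this
  rw [pref_getElem _ hi, pref_getElem _ hi] at this
  exact Option.some_injective _ this

lemma pref_take (X : Cantor) {m b : ℕ} (h : m ≤ b) : (pref X b).take m = pref X m := by
  apply List.ext_getElem
  · rw [List.length_take, pref_length, pref_length]; omega
  · intro i h1 h2
    rw [pref_length] at h2
    rw [List.getElem_take, pref_getElem _ (by omega), pref_getElem _ h2]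

lemma pref_prefix (X : Cantor) {a b : ℕ} (h : a ≤ b) : pref X a <+: pref X b := by
  rw [← pref_take X h]
  exact List.take_prefix _ _

/-- any dense set meets any cylinder -/
lemma dense_cyl {S : Set Cantor} (hS : Dense S) (τ : List Bool) :
    ∃ Y ∈ S, pref Y τ.length = τ := by
  set C : Set Cantor := ⋂ i ∈ Finset.range τ.length, {B : Cantor | B i = τ.getD i false} with hC
  have hopen1 : ∀ i : ℕ, IsOpen {B : Cantor | B i = τ.getD i false} := by
    intro i
    have he : {B : Cantor | B i = τ.getD i false} = (fun B : Cantor => B i) ⁻¹' {τ.getD i false} := rfl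
    rw [he]
    exact (continuous_apply i).isOpen_preimage _ (isOpen_discrete _)
  have hCopen : IsOpen C := isOpen_biInter_finset fun i _ => hopen1 i
  have hCne : C.Nonempty := by
    refine ⟨fun i => τ.getD i false, ?_⟩
    simp [hC]
  obtain ⟨Y, hYS, hYC⟩ := hS.exists_mem_open hCopen hCne
  refine ⟨Y, hYS, ?_⟩
  simp only [hC, Set.mem_iInter, Finset.mem_range, Set.mem_setOf_eq] at hYC
  apply List.ext_getElem
  · rw [pref_length]
  · intro i h1 h2
    rw [pref_getElem _ (by rwa [pref_length] at h1), hYC i (by rwa [pref_length] at h1)]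
    exact List.getD_eq_getElem τ false h2

/-- a dense-in-Cantor criterion via prefixes -/
lemma dense_of_pref {S : Set Cantor}
    (h : ∀ σ : List Bool, ∃ X ∈ S, pref X σ.length = σ) : Dense S := by
  intro A
  rw [mem_closure_iff]
  intro o ho hA
  obtain ⟨I, u, hu, hsub⟩ := isOpen_pi_iff.mp ho A hA
  set n : ℕ := (I.sup id) + 1 with hn
  obtain ⟨X, hXS, hXp⟩ := h (pref A n)
  rw [pref_length] at hXp
  refine ⟨X, hsub ?_, hXS⟩
  intro i hi
  have hin : i < n := by
    have : i ≤ I.sup id := Finset.le_sup (f := id) hi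
    omega
  rw [eq_lt_of_pref_eq hXp i hin]
  exact (hu i hi).2


open Encodable in
/-- the finite-extension construction of a computable member of a dense Π⁰₂ class. -/
lemma exists_computable_member {P : List ℕ → List Bool → Prop}
    (hP : ComputablePred fun p : List ℕ × List Bool => P p.1 p.2)
    (hex : ∀ (k : ℕ) (t : List Bool), ∃ τ' : List Bool, t <+: τ' ∧ t.length < τ'.length ∧
      ∃ m ≤ τ'.length, P [k] (τ'.take m)) :
    ∃ X : Cantor, Computable X ∧ ∀ k, ∃ m, P [k] (pref X m) := by
  obtain ⟨D, hD⟩ := hP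
  set d : List ℕ × List Bool → Bool := fun p => @decide (P p.1 p.2) (D p) with hd
  have hdiff : ∀ p : List ℕ × List Bool, d p = true ↔ P p.1 p.2 := by
    intro p
    rw [hd]
    exact @decide_eq_true_iff _ (D p)
  -- the search predicate
  set pred : (ℕ × List Bool) → ℕ → Bool := fun a n =>
    Option.casesOn (decode (α := List Bool) n.unpair.1) false fun τ' =>
      (decide (a.2 <+: τ') && decide (a.2.length < τ'.length) &&
        decide (n.unpair.2 ≤ τ'.length)) && d ([a.1], τ'.take n.unpair.2) with hpred
  have hpred_comp : Computable₂ pred := by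
    have hc1 : Computable fun x : (ℕ × List Bool) × ℕ => decode (α := List Bool) x.2.unpair.1 :=
      Computable.decode.comp ((Primrec.fst.comp (Primrec.unpair.comp Primrec.snd)).to_comp)
    apply Computable.option_casesOn hc1 (Computable.const false)
    -- g : ((ℕ × List Bool) × ℕ) → List Bool → Bool
    have hpre : Primrec₂ fun (x : (ℕ × List Bool) × ℕ) (τ' : List Bool) =>
        decide (x.1.2 <+: τ') := by
      have : Primrec₂ fun (x : (ℕ × List Bool) × ℕ) (τ' : List Bool) =>
          decide (τ'.take x.1.2.length = x.1.2) :=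
        PrimrecRel.decide (Primrec.eq.comp₂ (primrec_take.comp₂ Primrec₂.right
            ((Primrec.list_length.comp (Primrec.snd.comp Primrec.fst)).comp₂ Primrec₂.left))
          ((Primrec.snd.comp Primrec.fst).comp₂ Primrec₂.left))
      apply Primrec₂.of_eq this
      intro x τ'
      congr 1
      apply propext
      constructor
      · intro h; rw [← h]; exact List.take_prefix _ _
      · intro h
        obtain ⟨t, rfl⟩ := h
        exact List.take_left' rfl
    have hlt : Primrec₂ fun (x : (ℕ × List Bool) × ℕ) (τ' : List Bool) =>
        decide (x.1.2.length < τ'.length) :=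
      PrimrecRel.decide (Primrec.nat_lt.comp₂ ((Primrec.list_length.comp (Primrec.snd.comp Primrec.fst)).comp₂ Primrec₂.left)
        (Primrec.list_length.comp₂ Primrec₂.right))
    have hle : Primrec₂ fun (x : (ℕ × List Bool) × ℕ) (τ' : List Bool) =>
        decide (x.2.unpair.2 ≤ τ'.length) :=
      PrimrecRel.decide (Primrec.nat_le.comp₂ ((Primrec.snd.comp (Primrec.unpair.comp Primrec.snd)).comp₂ Primrec₂.left)
        (Primrec.list_length.comp₂ Primrec₂.right))
    have hband : Primrec₂ (· && ·) := Primrec.dom_bool₂ _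
    have hargs : Computable₂ fun (x : (ℕ × List Bool) × ℕ) (τ' : List Bool) =>
        d ([x.1.1], τ'.take x.2.unpair.2) := by
      apply hD.comp
      apply Computable.pair
      · exact ((Primrec.list_cons.comp (Primrec.fst.comp Primrec.fst) (Primrec.const [])).comp
          Primrec.fst).to_comp
      · exact (primrec_take.comp Primrec.snd
          ((Primrec.snd.comp (Primrec.unpair.comp Primrec.snd)).comp Primrec.fst)).to_comp
    exact (Computable₂.comp₂ hband.to_comp
      ((hband.comp₂ (hband.comp₂ hpre hlt) hle).to_comp) hargs).to₂
  -- existence of a witness for the search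
  have hex' : ∀ a : ℕ × List Bool, ∃ n, pred a n = true := by
    rintro ⟨k, t⟩
    obtain ⟨τ', h1, h2, m, hm, hp⟩ := hex k t
    refine ⟨Nat.pair (encode τ') m, ?_⟩
    rw [hpred]
    simp only [Nat.unpair_pair, encodek]
    simp [h1, h2, hm, (hdiff ([k], τ'.take m)).mpr hp]
  set F : (ℕ × List Bool) → ℕ := fun a => Nat.find (hex' a) with hF
  have hF_comp : Computable F := by
    have hrf : Partrec fun a : ℕ × List Bool => Nat.rfind ((pred a : ℕ →. Bool)) :=
      Partrec.rfind hpred_comp.partrec₂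
    apply Partrec.of_eq_tot hrf
    intro a
    rw [Nat.mem_rfind]
    constructor
    · rw [show ((pred a : ℕ →. Bool)) (F a) = Part.some (pred a (F a)) from rfl,
        Part.mem_some_iff]
      exact (Nat.find_spec (hex' a)).symm
    · intro m hm
      rw [show ((pred a : ℕ →. Bool)) m = Part.some (pred a m) from rfl, Part.mem_some_iff]
      have := Nat.find_min (hex' a) hm
      simp only [hF] at hm
      have h2 : pred a m ≠ true := Nat.find_min (hex' a) hm
      exact (Bool.eq_false_iff.mpr h2).symm
  -- the step function
  set step : (ℕ × List Bool) → List Bool :=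
    fun a => (decode (α := List Bool) (F a).unpair.1).getD [] with hstep
  have hstep_comp : Computable step :=
    Computable.option_getD
      (Computable.decode.comp ((Primrec.fst.comp Primrec.unpair).to_comp.comp hF_comp))
      (Computable.const [])
  -- properties of step
  have hstep_spec : ∀ a : ℕ × List Bool, a.2 <+: step a ∧ a.2.length < (step a).length ∧
      ∃ m ≤ (step a).length, P [a.1] ((step a).take m) := by
    rintro ⟨k, t⟩
    have hsp : pred (k, t) (F (k, t)) = true := Nat.find_spec (hex' (k, t))
    have hsp2 : (Option.casesOn (decode (α := List Bool) ((F (k, t)).unpair.1)) false fun τ' =>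
        (decide (t <+: τ') && decide (t.length < τ'.length) &&
          decide ((F (k, t)).unpair.2 ≤ τ'.length)) &&
          d ([k], τ'.take ((F (k, t)).unpair.2))) = true := hsp
    rcases hdec : decode (α := List Bool) ((F (k, t)).unpair.1) with _ | τ'
    · simp only [hdec] at hsp2; simp at hsp2
    · simp only [hdec] at hsp2
      have hstepa : step (k, t) = τ' := by
        have : step (k, t) = (decode (α := List Bool) ((F (k, t)).unpair.1)).getD [] := rfl
        rw [this, hdec]
        rfl
      simp only [Bool.and_eq_true, decide_eq_true_eq] at hsp2
      obtain ⟨⟨⟨hp1, hp2⟩, hp3⟩, hp4⟩ := hsp2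
      rw [hstepa]
      exact ⟨hp1, hp2, _, hp3, by
        have := (hdiff _).mp hp4
        simpa using this⟩
  -- the recursion
  set σf : ℕ → List Bool := fun k => Nat.rec [] (fun y IH => step (y, IH)) k with hσf
  have hσf_comp : Computable σf := by
    apply Computable.nat_rec Computable.id (Computable.const ([] : List Bool))
      (hstep_comp.comp Computable.snd).to₂
  have hσs : ∀ k, σf (k + 1) = step (k, σf k) := fun k => rfl
  have hpre2 : ∀ k, σf k <+: σf (k + 1) := fun k => (hstep_spec (k, σf k)).1
  have hlen2 : ∀ k, k ≤ (σf k).length := by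
    intro k
    induction k with
    | zero => omega
    | succ k ih =>
      have h2 : (σf k).length < (step (k, σf k)).length := (hstep_spec (k, σf k)).2.1
      rw [hσs k]
      omega
  set X : Cantor := fun i => (σf (i + 1)).getD i false with hXd
  refine ⟨X, ?_, ?_⟩
  · -- computability of X
    have : Computable fun i : ℕ => (σf (i + 1)).getD i false :=
      (Primrec.list_getD false).to_comp.comp
        (hσf_comp.comp (Primrec.succ).to_comp) Computable.id
    exact this
  · -- membership
    intro k
    obtain ⟨m, hm, hPm⟩ := (hstep_spec (k, σf k)).2.2
    refine ⟨m, ?_⟩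
    have : pref X m = (σf (k + 1)).take m := by
      rw [hXd]
      exact chain_pref hpre2 hlen2 (k := k + 1) (by rw [← hσs k] at hm; exact hm)
    rw [this]
    rw [hσs k]
    exact hPm


/-- The class `DIM_str^1 = {X | Dim(X) = 1}` is dense in Cantor space but
contains no computable sequence; therefore it is not a Π⁰₂ class. -/
theorem DIMstr_one_dense_no_computable_not_Pi02 (U : List Bool →. List Bool)
    (hU : UniversalPF U) :
    Dense {X : Cantor | DimK U X = 1} ∧
    (∀ X : Cantor, DimK U X = 1 → ¬ Computable X) ∧
    ¬ PiIn 2 DeltaPred {X : Cantor | DimK U X = 1} := by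
  have hdense : Dense {X : Cantor | DimK U X = 1} := by
    apply dense_of_pref
    intro σ
    obtain ⟨X, h1, h2⟩ := exists_dim_one_ext hU σ
    exact ⟨X, h2, h1⟩
  refine ⟨hdense, ?_, ?_⟩
  · intro X hX hcomp
    have h0 := DimK_computable_eq_zero hU hcomp
    rw [hX] at h0
    norm_num at h0
  · rintro ⟨P, hP, hiff⟩
    have hAlt : ∀ A : Cantor, A ∈ {X : Cantor | DimK U X = 1} ↔
        ∀ k, ∃ m, P [k] (pref A m) := by
      intro A
      rw [hiff A]
      rfl
    have hex : ∀ (k : ℕ) (t : List Bool), ∃ τ' : List Bool, t <+: τ' ∧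
        t.length < τ'.length ∧ ∃ m ≤ τ'.length, P [k] (τ'.take m) := by
      intro k t
      obtain ⟨Y, hYS, hYp⟩ := dense_cyl hdense t
      obtain ⟨m, hm⟩ := (hAlt Y).mp hYS k
      refine ⟨pref Y (max m (t.length + 1)), ?_, ?_, m, ?_, ?_⟩
      · have hp := pref_prefix Y (show t.length ≤ max m (t.length + 1) by omega)
        rwa [hYp] at hp
      · rw [pref_length]
        omega
      · rw [pref_length]
        exact le_max_left m _
      · rw [pref_take Y (le_max_left m _)]
        exact hm
    obtain ⟨X, hXc, hXm⟩ := exists_computable_member hP hex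
    have hXS : X ∈ {X : Cantor | DimK U X = 1} := (hAlt X).mpr hXm
    have h0 := DimK_computable_eq_zero hU hXc
    rw [Set.mem_setOf_eq] at hXS
    rw [hXS] at h0
    norm_num at h0
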